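/- Let (D(k))_{k≥1} be an i.i.d. sequence of real-valued random variables with δ := −E[D(1)] > 0, E[D(1)²] < ∞, and P{D(1) > 0} > 0. For r > 0 and x > 0, let Φ^r be the reflected random walk started at Φ^r(0) = r·x, i.e., Φ^r(k+1) = max(Φ^r(k) + D(k+1), 0), and let τ₀^r := inf{k ≥ 1 : Φ^r(k) = 0} be the first return time to the origin. Then E[τ₀^r] < ∞ for every r, and lim_{r→∞} r⁻¹ E[τ₀^r] = δ⁻¹ x. -/

import Mathlib

open MeasureTheory ProbabilityTheory Filter
open scoped ENNReal Classical

noncomputable section RWaux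
set_option linter.unusedSectionVars false
set_option linter.unusedVariables false
set_option maxHeartbeats 1000000

variable {Ω : Type*} [MeasureSpace Ω]

/-- partial sums of the walk started at `c`. -/
def rwS (D : ℕ → Ω → ℝ) (c : ℝ) (k : ℕ) (ω : Ω) : ℝ :=
  c + ∑ i ∈ Finset.range k, D (i+1) ω

/-- event "the walk stayed positive strictly before time `k`". -/
def rwA (D : ℕ → Ω → ℝ) (c : ℝ) (k : ℕ) : Set Ω :=
  {ω | ∀ j, 1 ≤ j → j < k → 0 < rwS D c j ω}

lemma rwS_zero (D : ℕ → Ω → ℝ) (c : ℝ) (ω : Ω) : rwS D c 0 ω = c := by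
  simp [rwS]

lemma rwS_succ (D : ℕ → Ω → ℝ) (c : ℝ) (k : ℕ) (ω : Ω) :
    rwS D c (k+1) ω = rwS D c k ω + D (k+1) ω := by
  simp [rwS, Finset.sum_range_succ, add_assoc]

lemma rwS_measurable (D : ℕ → Ω → ℝ) (hD : ∀ k, Measurable (D k)) (c : ℝ) (k : ℕ) :
    Measurable (rwS D c k) := by
  apply Measurable.add measurable_const
  exact Finset.measurable_sum _ (fun i _ => hD (i+1))

lemma rwA_measurable (D : ℕ → Ω → ℝ) (hD : ∀ k, Measurable (D k)) (c : ℝ) (k : ℕ) :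
    MeasurableSet (rwA D c k) := by
  have : rwA D c k = ⋂ (j : ℕ) (_ : 1 ≤ j) (_ : j < k), {ω | 0 < rwS D c j ω} := by
    ext ω; simp [rwA, Set.mem_iInter]
  rw [this]
  exact MeasurableSet.iInter fun j => MeasurableSet.iInter fun _ =>
    MeasurableSet.iInter fun _ => measurableSet_lt measurable_const (rwS_measurable D hD c j)

lemma rwA_antitone (D : ℕ → Ω → ℝ) (c : ℝ) : Antitone (rwA D c) := by
  intro a b hab ω hω j h1 h2
  exact hω j h1 (lt_of_lt_of_le h2 hab)

lemma rwA_one (D : ℕ → Ω → ℝ) (c : ℝ) : rwA D c 1 = Set.univ := by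
  ext ω; simp only [rwA, Set.mem_setOf_eq, Set.mem_univ, iff_true]
  intro j h1 h2; omega

/-- reindex: sums over Icc 1 n equal sums over range n shifted. -/
lemma sum_Icc_one_eq_sum_range {M : Type*} [AddCommMonoid M] (f : ℕ → M) (n : ℕ) :
    ∑ k ∈ Finset.Icc 1 n, f k = ∑ i ∈ Finset.range n, f (i+1) := by
  induction n with
  | zero => simp
  | succ n ih => rw [Finset.sum_Icc_succ_top (by omega), ih, Finset.sum_range_succ]

lemma rwS_eq_sum_Icc (D : ℕ → Ω → ℝ) (c : ℝ) (k : ℕ) (ω : Ω) :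
    rwS D c k ω = c + ∑ j ∈ Finset.Icc 1 k, D j ω := by
  rw [rwS, sum_Icc_one_eq_sum_range]


/-- auxiliary restriction map -/
def rwRestr (k : ℕ) (v : {i // i ∈ Finset.range k} → ℝ) (i : ℕ) : ℝ :=
  if h : i ∈ Finset.range k then v ⟨i, h⟩ else 0

lemma rwIndep (D : ℕ → Ω → ℝ) (hD : ∀ k, Measurable (D k))
    (hiid : iIndepFun D) (c : ℝ) (k : ℕ) :
    IndepFun (D k) (Set.indicator (rwA D c k) (fun _ => (1:ℝ))) ℙ := by
  have hdisj : Disjoint ({k} : Finset ℕ) (Finset.range k) := by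
    simp [Finset.disjoint_left]
  have h := hiid.indepFun_finset {k} (Finset.range k) hdisj hD
  set φ : ({i // i ∈ ({k} : Finset ℕ)} → ℝ) → ℝ :=
    fun v => v ⟨k, Finset.mem_singleton_self k⟩ with hφ
  have hφm : Measurable φ := measurable_pi_apply _
  set B : Set ({i // i ∈ Finset.range k} → ℝ) :=
    {v | ∀ j, 1 ≤ j → j < k → 0 < c + ∑ i ∈ Finset.range j, rwRestr k v (i+1)} with hB
  have hBmeas : MeasurableSet B := by
    have hBeq : B = ⋂ (j : ℕ) (_ : 1 ≤ j) (_ : j < k),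
        {v : {i // i ∈ Finset.range k} → ℝ
          | 0 < c + ∑ i ∈ Finset.range j, rwRestr k v (i+1)} := by
      ext v; simp [hB, Set.mem_iInter]
    rw [hBeq]
    refine MeasurableSet.iInter fun j => MeasurableSet.iInter fun _ =>
      MeasurableSet.iInter fun _ => measurableSet_lt measurable_const ?_
    apply Measurable.add measurable_const
    apply Finset.measurable_sum
    intro i _
    unfold rwRestr
    by_cases h : i + 1 ∈ Finset.range k
    · simp only [h, dif_pos]; exact measurable_pi_apply _
    · simp only [h, dif_neg, not_false_iff]; exact measurable_const
  set ψ : ({i // i ∈ Finset.range k} → ℝ) → ℝ := Set.indicator B (fun _ => (1:ℝ)) with hψ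
  have hψm : Measurable ψ := measurable_const.indicator hBmeas
  have h2 := h.comp hφm hψm
  have e1 : φ ∘ (fun a (i : {i // i ∈ ({k} : Finset ℕ)}) => D i a) = D k := rfl
  have e2 : ψ ∘ (fun a (i : {i // i ∈ Finset.range k}) => D i a)
      = Set.indicator (rwA D c k) (fun _ => (1:ℝ)) := by
    funext ω
    have hsum : ∀ j, 1 ≤ j → j < k →
        (∑ i ∈ Finset.range j, rwRestr k (fun i : {i // i ∈ Finset.range k} => D i ω) (i+1))
          = ∑ i ∈ Finset.range j, D (i+1) ω := by
      intro j h1 h2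
      apply Finset.sum_congr rfl
      intro i hi
      have hik : i + 1 ∈ Finset.range k := by
        rw [Finset.mem_range] at hi ⊢; omega
      simp [rwRestr, hik]
    have hmem : ((fun i : {i // i ∈ Finset.range k} => D i ω) ∈ B) ↔ ω ∈ rwA D c k := by
      constructor
      · intro hv j h1 h2
        have := hv j h1 h2
        rwa [hsum j h1 h2, ← rwS] at this
      · intro hω j h1 h2
        have := hω j h1 h2
        rwa [hsum j h1 h2, ← rwS]
    by_cases hc : ω ∈ rwA D c k
    · simp only [Function.comp_apply, hψ, Set.indicator_apply, hmem, hc, if_true,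
        Set.indicator_of_mem hc]
    · simp only [Function.comp_apply, hψ, Set.indicator_apply, hmem, hc, if_false,
        Set.indicator_of_notMem hc]
  rw [e1, e2] at h2
  exact h2

section ProbPart
variable [IsProbabilityMeasure (ℙ : Measure Ω)]

lemma rwTermIntegrable (D : ℕ → Ω → ℝ) (hD : ∀ k, Measurable (D k))
    (hident : ∀ k, IdentDistrib (D k) (D 1))
    (g : ℝ → ℝ) (hg : Measurable g) (hgint : Integrable (fun ω => g (D 1 ω)))
    (c : ℝ) (k : ℕ) :
    Integrable (fun ω => g (D k ω) * Set.indicator (rwA D c k) (fun _ => (1:ℝ)) ω) := by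
  have hkint : Integrable (fun ω => g (D k ω)) :=
    (((hident k).comp hg).integrable_iff).mpr hgint
  have : (fun ω => g (D k ω) * Set.indicator (rwA D c k) (fun _ => (1:ℝ)) ω)
      = Set.indicator (rwA D c k) (fun ω => g (D k ω)) := by
    funext ω
    by_cases hc : ω ∈ rwA D c k
    · simp [Set.indicator_of_mem hc]
    · simp [Set.indicator_of_notMem hc]
  rw [this]
  exact hkint.indicator (rwA_measurable D hD c k)

lemma rwProd (D : ℕ → Ω → ℝ) (hD : ∀ k, Measurable (D k))
    (hiid : iIndepFun D)
    (hident : ∀ k, IdentDistrib (D k) (D 1))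
    (g : ℝ → ℝ) (hg : Measurable g) (hgint : Integrable (fun ω => g (D 1 ω)))
    (c : ℝ) (k : ℕ) :
    ∫ ω, g (D k ω) * Set.indicator (rwA D c k) (fun _ => (1:ℝ)) ω
      = (∫ ω, g (D 1 ω)) * (ℙ (rwA D c k)).toReal := by
  have hindep := (rwIndep D hD hiid c k).comp hg (measurable_id : Measurable (id : ℝ → ℝ))
  have hkint : Integrable (fun ω => g (D k ω)) :=
    (((hident k).comp hg).integrable_iff).mpr hgint
  have hindint : Integrable (Set.indicator (rwA D c k) (fun _ => (1:ℝ))) := by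
    have := (integrable_const (1:ℝ)).indicator (μ := (ℙ : Measure Ω)) (rwA_measurable D hD c k)
    exact this
  have hmul := hindep.integral_mul_eq_mul_integral hkint.aestronglyMeasurable hindint.aestronglyMeasurable
  calc ∫ ω, g (D k ω) * Set.indicator (rwA D c k) (fun _ => (1:ℝ)) ω
      = integral ℙ ((g ∘ D k) * (id ∘ Set.indicator (rwA D c k) (fun _ => (1:ℝ)))) := rfl
    _ = integral ℙ (g ∘ D k)
          * integral ℙ (id ∘ Set.indicator (rwA D c k) (fun _ => (1:ℝ))) := hmul
    _ = (∫ ω, g (D 1 ω)) * (ℙ (rwA D c k)).toReal := by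
        have h1 : integral ℙ (g ∘ D k) = ∫ ω, g (D 1 ω) :=
          ((hident k).comp hg).integral_eq
        have h2 : integral ℙ (id ∘ Set.indicator (rwA D c k) (fun _ => (1:ℝ)))
            = (ℙ (rwA D c k)).toReal := by
          have : (id ∘ Set.indicator (rwA D c k) (fun _ => (1:ℝ)))
              = Set.indicator (rwA D c k) (1 : Ω → ℝ) := rfl
          rw [this, integral_indicator_one (rwA_measurable D hD c k), Measure.real]
        rw [h1, h2]

/-- truncated Wald-type identity -/
lemma rwSumExp (D : ℕ → Ω → ℝ) (hD : ∀ k, Measurable (D k))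
    (hiid : iIndepFun D)
    (hident : ∀ k, IdentDistrib (D k) (D 1))
    (g : ℝ → ℝ) (hg : Measurable g) (hgint : Integrable (fun ω => g (D 1 ω)))
    (c : ℝ) (n : ℕ) :
    ∫ ω, (∑ k ∈ Finset.Icc 1 n, g (D k ω) * Set.indicator (rwA D c k) (fun _ => (1:ℝ)) ω)
      = (∫ ω, g (D 1 ω)) * (∑ k ∈ Finset.Icc 1 n, (ℙ (rwA D c k)).toReal) := by
  rw [integral_finset_sum _ (fun k _ => rwTermIntegrable D hD hident g hg hgint c k)]
  rw [Finset.mul_sum]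
  exact Finset.sum_congr rfl fun k _ => rwProd D hD hiid hident g hg hgint c k

end ProbPart

lemma rwMaxT (D : ℕ → Ω → ℝ) (c : ℝ) (n : ℕ) (hn : 1 ≤ n) (ω : Ω) :
    ∃ t, 1 ≤ t ∧ t ≤ n ∧ (∀ k, 1 ≤ k → k ≤ n → (ω ∈ rwA D c k ↔ k ≤ t)) := by
  set L := (Finset.Icc 1 n).filter (fun k => ω ∈ rwA D c k) with hL
  have h1L : 1 ∈ L := by
    simp only [hL, Finset.mem_filter, Finset.mem_Icc]
    refine ⟨⟨le_refl 1, hn⟩, ?_⟩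
    rw [rwA_one]; trivial
  have hne : L.Nonempty := ⟨1, h1L⟩
  refine ⟨L.max' hne, ?_, ?_, ?_⟩
  · have := L.max'_mem hne
    simp only [hL, Finset.mem_filter, Finset.mem_Icc] at this
    exact this.1.1
  · have := L.max'_mem hne
    simp only [hL, Finset.mem_filter, Finset.mem_Icc] at this
    exact this.1.2
  · intro k hk1 hkn
    constructor
    · intro hA
      apply L.le_max'
      simp only [hL, Finset.mem_filter, Finset.mem_Icc]
      exact ⟨⟨hk1, hkn⟩, hA⟩
    · intro hkt
      have hmem := L.max'_mem hne
      simp only [hL, Finset.mem_filter, Finset.mem_Icc] at hmem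
      exact rwA_antitone D c hkt hmem.2

lemma rwSumIndicator (D : ℕ → Ω → ℝ) (c : ℝ) (n t : ℕ) (ω : Ω) (ht : t ≤ n)
    (hiff : ∀ k, 1 ≤ k → k ≤ n → (ω ∈ rwA D c k ↔ k ≤ t)) (f : ℕ → ℝ) :
    ∑ k ∈ Finset.Icc 1 n, f k * Set.indicator (rwA D c k) (fun _ => (1:ℝ)) ω
      = ∑ k ∈ Finset.Icc 1 t, f k := by
  have h1 : ∀ k ∈ Finset.Icc 1 n,
      f k * Set.indicator (rwA D c k) (fun _ => (1:ℝ)) ω = if k ≤ t then f k else 0 := by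
    intro k hk
    rw [Finset.mem_Icc] at hk
    by_cases hA : ω ∈ rwA D c k
    · rw [Set.indicator_of_mem hA, if_pos ((hiff k hk.1 hk.2).mp hA)]; ring
    · rw [Set.indicator_of_notMem hA,
        if_neg (fun h => hA ((hiff k hk.1 hk.2).mpr h))]; ring
  rw [Finset.sum_congr rfl h1, ← Finset.sum_filter]
  congr 1
  ext k
  simp only [Finset.mem_filter, Finset.mem_Icc]
  omega

lemma rwPointwise (D : ℕ → Ω → ℝ) (c : ℝ) (hc : 0 < c) (M : ℝ) (hM : 0 ≤ M)
    (n : ℕ) (ω : Ω) :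
    -c - M - ∑ k ∈ Finset.Icc 1 n,
        (max (-(D k ω) - M) 0) * Set.indicator (rwA D c k) (fun _ => (1:ℝ)) ω
      ≤ ∑ k ∈ Finset.Icc 1 n, D k ω * Set.indicator (rwA D c k) (fun _ => (1:ℝ)) ω := by
  rcases Nat.eq_zero_or_pos n with hn | hn
  · subst hn; simp; linarith
  obtain ⟨t, ht1, htn, hiff⟩ := rwMaxT D c n hn ω
  rw [rwSumIndicator D c n t ω htn hiff, rwSumIndicator D c n t ω htn hiff]
  have hSt : rwS D c t ω = c + ∑ k ∈ Finset.Icc 1 t, D k ω := rwS_eq_sum_Icc D c t ω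
  -- rwS (t-1) > 0
  obtain ⟨s, rfl⟩ : ∃ s, t = s + 1 := ⟨t - 1, by omega⟩
  have hprev : 0 < rwS D c s ω := by
    rcases Nat.eq_zero_or_pos s with hs | hs
    · subst hs; rw [rwS_zero]; exact hc
    · have hA : ω ∈ rwA D c (s+1) := (hiff (s+1) ht1 htn).mpr le_rfl
      exact hA s hs (Nat.lt_succ_self s)
  have hDt : D (s+1) ω ≤ rwS D c (s+1) ω := by
    rw [rwS_succ]; linarith
  have hgt : -(D (s+1) ω) - M ≤ max (-(D (s+1) ω) - M) 0 := le_max_left _ _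
  have hsingle : max (-(D (s+1) ω) - M) 0
      ≤ ∑ k ∈ Finset.Icc 1 (s+1), max (-(D k ω) - M) 0 := by
    apply Finset.single_le_sum (f := fun k => max (-(D k ω) - M) 0)
    · intro i _; exact le_max_right _ _
    · rw [Finset.mem_Icc]; omega
  have : -c - M - ∑ k ∈ Finset.Icc 1 (s+1), max (-(D k ω) - M) 0
      ≤ D (s+1) ω - c := by linarith
  calc -c - M - ∑ k ∈ Finset.Icc 1 (s+1), max (-(D k ω) - M) 0
      ≤ D (s+1) ω - c := this
    _ ≤ rwS D c (s+1) ω - c := by linarith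
    _ = ∑ k ∈ Finset.Icc 1 (s+1), D k ω := by rw [hSt]; ring

/-- Before the first passage below 0, the reflected chain equals the free walk. -/
lemma rwPhiEq (D : ℕ → Ω → ℝ) (c : ℝ) (Φ' : ℕ → Ω → ℝ) (ω : Ω)
    (h0 : Φ' 0 ω = c) (hstep : ∀ k, Φ' (k+1) ω = max (Φ' k ω + D (k+1) ω) 0) :
    ∀ k, ω ∈ rwA D c (k+1) → Φ' k ω = rwS D c k ω := by
  intro k
  induction k with
  | zero => intro _; rw [h0, rwS_zero]
  | succ k ih =>
    intro hA
    have hA' : ω ∈ rwA D c (k+1) := rwA_antitone D c (Nat.le_succ _) hA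
    have hpos : 0 < rwS D c (k+1) ω := hA (k+1) (by omega) (by omega)
    rw [hstep k, ih hA', ← rwS_succ]
    exact max_eq_left hpos.le

lemma rwTauEq (D : ℕ → Ω → ℝ) (c : ℝ) (hc : 0 < c) (Φ' : ℕ → Ω → ℝ) (ω : Ω)
    (h0 : Φ' 0 ω = c) (hstep : ∀ k, Φ' (k+1) ω = max (Φ' k ω + D (k+1) ω) 0) :
    (⨅ (k : ℕ) (_ : 1 ≤ k ∧ Φ' k ω = 0), (k : ℝ≥0∞))
      = ⨅ (k : ℕ) (_ : 1 ≤ k ∧ rwS D c k ω ≤ 0), (k : ℝ≥0∞) := by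
  apply le_antisymm
  · refine le_iInf₂ fun k hk => ?_
    have hex : ∃ m, 1 ≤ m ∧ rwS D c m ω ≤ 0 := ⟨k, hk⟩
    set t := Nat.find hex with htdef
    obtain ⟨ht1, htS⟩ := Nat.find_spec hex
    have hAt : ω ∈ rwA D c t := by
      intro j hj1 hjt
      by_contra hcon
      exact absurd ⟨hj1, le_of_not_gt hcon⟩ (Nat.find_min hex hjt)
    obtain ⟨s, hs⟩ : ∃ s, Nat.find hex = s + 1 := ⟨Nat.find hex - 1, by omega⟩
    have hAs : ω ∈ rwA D c (s+1) := by rw [htdef, hs] at hAt; exact hAt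
    have htS' : rwS D c (s+1) ω ≤ 0 := by rwa [hs] at htS
    have hΦt : Φ' (s+1) ω = 0 := by
      rw [hstep s, rwPhiEq D c Φ' ω h0 hstep s hAs, ← rwS_succ]
      exact max_eq_right htS'
    have hfind : Nat.find hex ≤ k := Nat.find_min' hex hk
    calc (⨅ (m : ℕ) (_ : 1 ≤ m ∧ Φ' m ω = 0), (m : ℝ≥0∞)) ≤ ((s+1 : ℕ) : ℝ≥0∞) :=
          iInf₂_le (s+1) ⟨by omega, hΦt⟩
      _ ≤ (k : ℝ≥0∞) := Nat.cast_le.mpr (by omega)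
  · refine le_iInf₂ fun k hk => ?_
    obtain ⟨hk1, hkΦ⟩ := hk
    have hex : ∃ j, 1 ≤ j ∧ j ≤ k ∧ rwS D c j ω ≤ 0 := by
      by_contra hcon
      push_neg at hcon
      have hA : ω ∈ rwA D c (k+1) := by
        intro j hj1 hjk
        exact hcon j hj1 (by omega)
      have : Φ' k ω = rwS D c k ω := rwPhiEq D c Φ' ω h0 hstep k hA
      have hpos : 0 < rwS D c k ω := hA k hk1 (by omega)
      rw [hkΦ] at this; linarith
    obtain ⟨j, hj1, hjk, hjS⟩ := hex
    calc (⨅ (m : ℕ) (_ : 1 ≤ m ∧ rwS D c m ω ≤ 0), (m : ℝ≥0∞)) ≤ (j : ℝ≥0∞) :=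
          iInf₂_le j ⟨hj1, hjS⟩
      _ ≤ (k : ℝ≥0∞) := Nat.cast_le.mpr hjk

/-- pointwise identification of first passage time with sup of indicator sums -/
lemma rwSupEq (D : ℕ → Ω → ℝ) (c : ℝ) (ω : Ω) :
    (⨅ (k : ℕ) (_ : 1 ≤ k ∧ rwS D c k ω ≤ 0), (k : ℝ≥0∞))
      = ⨆ n, ∑ k ∈ Finset.Icc 1 n,
          Set.indicator (rwA D c k) (fun _ => (1:ℝ≥0∞)) ω := by
  by_cases h : ∃ m, 1 ≤ m ∧ rwS D c m ω ≤ 0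
  · set t := Nat.find h with htdef
    obtain ⟨ht1, htS⟩ := Nat.find_spec h
    have hiff : ∀ k, 1 ≤ k → (ω ∈ rwA D c k ↔ k ≤ t) := by
      intro k hk1
      constructor
      · intro hA
        by_contra hcon
        have : 0 < rwS D c t ω := hA t ht1 (by omega)
        linarith
      · intro hkt j hj1 hjk
        by_contra hcon
        exact absurd ⟨hj1, le_of_not_gt hcon⟩ (Nat.find_min h (by omega))
    have hsum : ∀ n, ∑ k ∈ Finset.Icc 1 n,
        Set.indicator (rwA D c k) (fun _ => (1:ℝ≥0∞)) ω = (min n t : ℕ) := by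
      intro n
      have h1 : ∀ k ∈ Finset.Icc 1 n,
          Set.indicator (rwA D c k) (fun _ => (1:ℝ≥0∞)) ω
            = if k ≤ t then (1:ℝ≥0∞) else 0 := by
        intro k hk
        rw [Finset.mem_Icc] at hk
        by_cases hA : ω ∈ rwA D c k
        · rw [Set.indicator_of_mem hA, if_pos ((hiff k hk.1).mp hA)]
        · rw [Set.indicator_of_notMem hA, if_neg (fun hh => hA ((hiff k hk.1).mpr hh))]
      rw [Finset.sum_congr rfl h1, ← Finset.sum_filter]
      have : (Finset.Icc 1 n).filter (fun k => k ≤ t) = Finset.Icc 1 (min n t) := by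
        ext k; simp only [Finset.mem_filter, Finset.mem_Icc]; omega
      rw [this, Finset.sum_const, Nat.card_Icc]
      simp
    apply le_antisymm
    · refine le_iSup_iff.mpr fun b hb => ?_
      have := hb t
      rw [hsum t, min_self] at this
      exact le_trans (iInf₂_le t ⟨ht1, htS⟩) this
    · refine iSup_le fun n => ?_
      rw [hsum n]
      have : (⨅ (k : ℕ) (_ : 1 ≤ k ∧ rwS D c k ω ≤ 0), (k : ℝ≥0∞)) = (t : ℝ≥0∞) := by
        apply le_antisymm (iInf₂_le t ⟨ht1, htS⟩)
        exact le_iInf₂ fun k hk => Nat.cast_le.mpr (Nat.find_min' h hk)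
      rw [this]
      exact_mod_cast Nat.cast_le.mpr (min_le_right n t)
  · push_neg at h
    have hA : ∀ k, ω ∈ rwA D c k := by
      intro k j hj1 hjk
      by_contra hcon
      exact absurd (le_of_not_gt hcon) (not_le.mpr (h j hj1))
    have h2 : ∀ k : ℕ, ¬(1 ≤ k ∧ rwS D c k ω ≤ 0) := by
      intro k ⟨hk1, hkS⟩
      exact absurd hkS (not_le.mpr (h k hk1))
    rw [iInf_eq_top.mpr fun k => iInf_eq_top.mpr fun hk => absurd hk (h2 k)]
    have hsum : ∀ n : ℕ, ∑ k ∈ Finset.Icc 1 n,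
        Set.indicator (rwA D c k) (fun _ => (1:ℝ≥0∞)) ω = (n : ℝ≥0∞) := by
      intro n
      have : ∀ k ∈ Finset.Icc 1 n,
          Set.indicator (rwA D c k) (fun _ => (1:ℝ≥0∞)) ω = 1 := fun k _ =>
        Set.indicator_of_mem (hA k) _
      rw [Finset.sum_congr rfl this, Finset.sum_const, Nat.card_Icc]
      simp
    refine (top_unique ?_).symm
    calc (⊤:ℝ≥0∞) = ⨆ n : ℕ, (n:ℝ≥0∞) := ENNReal.iSup_natCast.symm
      _ ≤ _ := iSup_le fun n => le_iSup_of_le n (by rw [hsum n])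

/-- lintegral of the sup of indicator sums -/
lemma rwLintegral (D : ℕ → Ω → ℝ) (hD : ∀ k, Measurable (D k)) (c : ℝ) :
    ∫⁻ ω, (⨆ n, ∑ k ∈ Finset.Icc 1 n,
        Set.indicator (rwA D c k) (fun _ => (1:ℝ≥0∞)) ω)
      = ⨆ n, ∑ k ∈ Finset.Icc 1 n, ℙ (rwA D c k) := by
  have hmeas : ∀ n, Measurable (fun ω => ∑ k ∈ Finset.Icc 1 n,
      Set.indicator (rwA D c k) (fun _ => (1:ℝ≥0∞)) ω) := by
    intro n
    apply Finset.measurable_sum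
    intro k _
    exact measurable_const.indicator (rwA_measurable D hD c k)
  have hmono : Monotone (fun n => fun ω => ∑ k ∈ Finset.Icc 1 n,
      Set.indicator (rwA D c k) (fun _ => (1:ℝ≥0∞)) ω) := by
    intro a b hab ω
    apply Finset.sum_le_sum_of_subset
    exact Finset.Icc_subset_Icc_right hab
  rw [lintegral_iSup hmeas hmono]
  congr 1
  funext n
  rw [lintegral_finset_sum _ (fun k _ => measurable_const.indicator (rwA_measurable D hD c k))]
  congr 1
  funext k
  exact lintegral_indicator_one (rwA_measurable D hD c k)

section ProbPart2
variable [IsProbabilityMeasure (ℙ : Measure Ω)]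

-- measurability and integrability of the truncation function
lemma gM_meas (M : ℝ) : Measurable (fun y : ℝ => max (-y - M) 0) :=
  ((measurable_id.neg.sub measurable_const).max measurable_const)

lemma gM_int (D : ℕ → Ω → ℝ) (hD : ∀ k, Measurable (D k)) (hDint : Integrable (D 1))
    (M : ℝ) (hM : 0 ≤ M) :
    Integrable (fun ω => max (-(D 1 ω) - M) 0) := by
  apply Integrable.mono' hDint.abs ((gM_meas M).comp (hD 1)).aestronglyMeasurable
  filter_upwards with ω
  show ‖max (-(D 1 ω) - M) 0‖ ≤ |D 1 ω|
  rw [Real.norm_eq_abs, abs_of_nonneg (le_max_right _ _)]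
  rcases le_or_gt (-(D 1 ω) - M) 0 with h | h
  · rw [max_eq_right h]; exact abs_nonneg _
  · rw [max_eq_left h.le]
    have := neg_abs_le (D 1 ω); linarith

lemma gM_nonneg_int (D : ℕ → Ω → ℝ) (M : ℝ) : 0 ≤ ∫ ω, max (-(D 1 ω) - M) 0 :=
  integral_nonneg (fun ω => le_max_right _ _)

/-- Upper bound: `p n (δ - eM) ≤ c + M`. -/
lemma rwUpper (D : ℕ → Ω → ℝ) (hD : ∀ k, Measurable (D k))
    (hiid : iIndepFun D)
    (hident : ∀ k, IdentDistrib (D k) (D 1))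
    (δ : ℝ) (hδ : 0 < δ) (hDint : Integrable (D 1)) (hmean : (∫ ω, D 1 ω) = -δ)
    (c : ℝ) (hc : 0 < c) (M : ℝ) (hM : 0 ≤ M)
    (heM : (∫ ω, max (-(D 1 ω) - M) 0) < δ) (n : ℕ) :
    ∑ k ∈ Finset.Icc 1 n, (ℙ (rwA D c k)).toReal
      ≤ (c + M) / (δ - (∫ ω, max (-(D 1 ω) - M) 0)) := by
  set eM := ∫ ω, max (-(D 1 ω) - M) 0 with heMdef
  set p := ∑ k ∈ Finset.Icc 1 n, (ℙ (rwA D c k)).toReal with hp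
  have hWald : ∫ ω, (∑ k ∈ Finset.Icc 1 n,
      D k ω * Set.indicator (rwA D c k) (fun _ => (1:ℝ)) ω) = -δ * p := by
    have := rwSumExp D hD hiid hident (fun y => y) measurable_id
      (by simpa using hDint) c n
    simpa [hmean] using this
  have hgint : Integrable (fun ω => max (-(D 1 ω) - M) 0) := gM_int D hD hDint M hM
  have hWaldg : ∫ ω, (∑ k ∈ Finset.Icc 1 n,
      (max (-(D k ω) - M) 0) * Set.indicator (rwA D c k) (fun _ => (1:ℝ)) ω) = eM * p :=
    rwSumExp D hD hiid hident (fun y => max (-y - M) 0) (gM_meas M) hgint c n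
  have hsumint : Integrable (fun ω => ∑ k ∈ Finset.Icc 1 n,
      (max (-(D k ω) - M) 0) * Set.indicator (rwA D c k) (fun _ => (1:ℝ)) ω) :=
    integrable_finset_sum _ fun k _ =>
      rwTermIntegrable D hD hident _ (gM_meas M) hgint c k
  have hsumint2 : Integrable (fun ω => ∑ k ∈ Finset.Icc 1 n,
      D k ω * Set.indicator (rwA D c k) (fun _ => (1:ℝ)) ω) :=
    integrable_finset_sum _ fun k _ =>
      rwTermIntegrable D hD hident _ measurable_id (by simpa using hDint) c k
  have hmono : ∫ ω, ((-c - M) - ∑ k ∈ Finset.Icc 1 n,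
        (max (-(D k ω) - M) 0) * Set.indicator (rwA D c k) (fun _ => (1:ℝ)) ω)
      ≤ ∫ ω, (∑ k ∈ Finset.Icc 1 n,
        D k ω * Set.indicator (rwA D c k) (fun _ => (1:ℝ)) ω) := by
    apply integral_mono ((integrable_const (-c - M)).sub hsumint) hsumint2
    intro ω
    have := rwPointwise D c hc M hM n ω
    simp only [Pi.sub_apply]
    linarith
  rw [integral_sub (integrable_const (-c - M)) hsumint, integral_const] at hmono
  simp only [probReal_univ, one_smul] at hmono
  rw [hWald, hWaldg] at hmono
  rw [le_div_iff₀ (by linarith)]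
  linarith

/-- Lower bound via dominated convergence. -/
lemma rwLower (D : ℕ → Ω → ℝ) (hD : ∀ k, Measurable (D k))
    (hiid : iIndepFun D)
    (hident : ∀ k, IdentDistrib (D k) (D 1))
    (δ : ℝ) (hδ : 0 < δ) (hDint : Integrable (D 1)) (hmean : (∫ ω, D 1 ω) = -δ)
    (c : ℝ) (hc : 0 < c)
    (hJ : (⨆ n, ∑ k ∈ Finset.Icc 1 n, ℙ (rwA D c k)) ≠ ⊤) :
    c / δ ≤ (⨆ n, ∑ k ∈ Finset.Icc 1 n, ℙ (rwA D c k)).toReal := by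
  set J := ⨆ n, ∑ k ∈ Finset.Icc 1 n, ℙ (rwA D c k) with hJdef
  set I : ℕ → Ω → ℝ := fun k => Set.indicator (rwA D c k) (fun _ => (1:ℝ)) with hI
  set Y : ℕ → Ω → ℝ := fun n ω => ∑ k ∈ Finset.Icc 1 n, D k ω * I k ω with hY
  set p : ℕ → ℝ := fun n => ∑ k ∈ Finset.Icc 1 n, (ℙ (rwA D c k)).toReal with hpdef
  have hqne : ∀ n, (∑ k ∈ Finset.Icc 1 n, ℙ (rwA D c k)) ≠ ⊤ :=
    fun n => ENNReal.sum_ne_top.mpr fun k _ => measure_ne_top _ _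
  have hqtoReal : ∀ n, (∑ k ∈ Finset.Icc 1 n, ℙ (rwA D c k)).toReal = p n :=
    fun n => ENNReal.toReal_sum fun k _ => measure_ne_top _ _
  have hpJ : ∀ n, p n ≤ J.toReal := by
    intro n
    rw [← hqtoReal n]
    exact ENNReal.toReal_mono hJ (le_iSup (fun n => ∑ k ∈ Finset.Icc 1 n, ℙ (rwA D c k)) n)
  have hWald : ∀ n, ∫ ω, Y n ω = -δ * p n := by
    intro n
    have := rwSumExp D hD hiid hident (fun y => y) measurable_id
      (by simpa using hDint) c n
    simpa [hmean, hY, hI, hpdef] using this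
  -- tsum of measures is finite
  have htsumJ : (∑' (k : ℕ), ℙ (rwA D c (k+1))) = J := by
    rw [ENNReal.tsum_eq_iSup_nat, hJdef]
    congr 1
    funext n
    rw [sum_Icc_one_eq_sum_range (fun k => ℙ (rwA D c k)) n]
  -- dominating function
  set G : Ω → ℝ≥0∞ := fun ω => ∑' (k : ℕ), ENNReal.ofReal (|D (k+1) ω| * I (k+1) ω)
    with hG
  have hGmeas : Measurable G := by
    apply Measurable.ennreal_tsum
    intro k
    exact ((hD (k+1)).abs.mul
      (measurable_const.indicator (rwA_measurable D hD c (k+1)))).ennreal_ofReal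
  have habs_int : ∀ k, Integrable (fun ω => |D k ω| * I k ω) := fun k =>
    rwTermIntegrable D hD hident (fun y => |y|) measurable_abs hDint.abs c k
  have habs_nonneg : ∀ k ω, 0 ≤ |D k ω| * I k ω := fun k ω =>
    mul_nonneg (abs_nonneg _) (Set.indicator_nonneg (fun _ _ => zero_le_one) ω)
  have hGlint : ∫⁻ ω, G ω ≠ ⊤ := by
    rw [hG]
    rw [lintegral_tsum fun k => (show Measurable (fun ω => ENNReal.ofReal (|D (k+1) ω| * I (k+1) ω)) from ((hD (k+1)).abs.mul
      (measurable_const.indicator (rwA_measurable D hD c (k+1)))).ennreal_ofReal).aemeasurable]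
    have hterm : ∀ k : ℕ, (∫⁻ ω, ENNReal.ofReal (|D (k+1) ω| * I (k+1) ω))
        ≤ ENNReal.ofReal (∫ ω, |D 1 ω|) * ℙ (rwA D c (k+1)) := by
      intro k
      rw [← ofReal_integral_eq_lintegral_ofReal (habs_int (k+1))
        (Filter.Eventually.of_forall (habs_nonneg (k+1)))]
      rw [rwProd D hD hiid hident (fun y => |y|) measurable_abs hDint.abs c (k+1)]
      rw [ENNReal.ofReal_mul (integral_nonneg fun ω => abs_nonneg _)]
      gcongr
      rw [ENNReal.ofReal_toReal (measure_ne_top _ _)]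
    have h2 : (∑' (k : ℕ), (∫⁻ ω, ENNReal.ofReal (|D (k+1) ω| * I (k+1) ω)))
        ≤ ENNReal.ofReal (∫ ω, |D 1 ω|) * J := by
      rw [← htsumJ, ← ENNReal.tsum_mul_left]
      exact ENNReal.tsum_le_tsum hterm
    exact ne_top_of_le_ne_top (ENNReal.mul_ne_top ENNReal.ofReal_ne_top hJ) h2
  have hGae : ∀ᵐ ω, G ω < ⊤ := ae_lt_top hGmeas hGlint
  set bd : Ω → ℝ := fun ω => (G ω).toReal with hbd
  have hbdint : Integrable bd := integrable_toReal_of_lintegral_ne_top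
    hGmeas.aemeasurable hGlint
  -- the bound on |Y n|
  have hYbd : ∀ n, ∀ᵐ ω, ‖Y n ω‖ ≤ bd ω := by
    intro n
    filter_upwards [hGae] with ω hGω
    have h1 : ‖Y n ω‖ ≤ ∑ k ∈ Finset.Icc 1 n, |D k ω| * I k ω := by
      rw [hY, Real.norm_eq_abs]
      refine le_trans (Finset.abs_sum_le_sum_abs _ _) ?_
      apply Finset.sum_le_sum
      intro k _
      rw [abs_mul, abs_of_nonneg (Set.indicator_nonneg (fun _ _ => zero_le_one) ω)]
    have h2 : ∑ k ∈ Finset.Icc 1 n, |D k ω| * I k ω ≤ bd ω := by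
      rw [hbd]
      refine (ENNReal.ofReal_le_iff_le_toReal hGω.ne).mp ?_
      rw [sum_Icc_one_eq_sum_range (fun k => |D k ω| * I k ω) n]
      rw [ENNReal.ofReal_sum_of_nonneg (fun i _ => habs_nonneg (i+1) ω)]
      exact le_trans (ENNReal.sum_le_tsum (Finset.range n)) le_rfl
    linarith
  -- almost sure first passage
  have hae : ∀ᵐ ω, ∃ m, 1 ≤ m ∧ rwS D c m ω ≤ 0 := by
    have htend : Tendsto (fun k : ℕ => ℙ (rwA D c (k+1))) atTop (nhds 0) :=
      ENNReal.tendsto_atTop_zero_of_tsum_ne_top (htsumJ ▸ hJ)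
    have hInull : ℙ (⋂ k : ℕ, rwA D c (k+1)) = 0 := by
      refine le_antisymm ?_ (by positivity)
      refine ge_of_tendsto' htend fun k => ?_
      exact measure_mono (Set.iInter_subset _ k)
    rw [ae_iff]
    refine measure_mono_null ?_ hInull
    intro ω hω
    simp only [Set.mem_setOf_eq, not_exists, not_and, not_le] at hω
    refine Set.mem_iInter.mpr fun k => ?_
    intro j hj1 hjk
    exact hω j hj1
  -- limit function
  set flim : Ω → ℝ := fun ω =>
    if h : ∃ m, 1 ≤ m ∧ rwS D c m ω ≤ 0 then rwS D c (Nat.find h) ω - c else 0 with hflim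
  have hYtend : ∀ᵐ ω, Tendsto (fun n => Y n ω) atTop (nhds (flim ω)) := by
    filter_upwards [hae] with ω hω
    rw [hflim]
    simp only [dif_pos hω]
    set t := Nat.find hω with ht
    obtain ⟨ht1, htS⟩ := Nat.find_spec hω
    have hiff : ∀ k, 1 ≤ k → (ω ∈ rwA D c k ↔ k ≤ t) := by
      intro k hk1
      constructor
      · intro hA
        by_contra hcon
        have : 0 < rwS D c t ω := hA t ht1 (by omega)
        linarith
      · intro hkt j hj1 hjk
        by_contra hcon
        exact absurd ⟨hj1, le_of_not_gt hcon⟩ (Nat.find_min hω (by omega))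
    apply tendsto_atTop_of_eventually_const (i₀ := t)
    intro n hn
    simp only [hY, hI]
    rw [rwSumIndicator D c n t ω hn (fun k hk1 hkn => hiff k hk1) (fun k => D k ω)]
    rw [rwS_eq_sum_Icc D c t ω]
    ring
  -- integrability of flim
  have hYmeas : ∀ n, AEStronglyMeasurable (Y n) ℙ := fun n =>
    (integrable_finset_sum _ fun k _ =>
      rwTermIntegrable D hD hident _ measurable_id (by simpa using hDint) c k
        ).aestronglyMeasurable
  have hflim_meas : AEStronglyMeasurable flim ℙ :=
    aestronglyMeasurable_of_tendsto_ae atTop hYmeas hYtend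
  have hflim_bd : ∀ᵐ ω, ‖flim ω‖ ≤ bd ω := by
    have hall : ∀ᵐ ω, ∀ n, ‖Y n ω‖ ≤ bd ω := ae_all_iff.mpr hYbd
    filter_upwards [hall, hYtend] with ω hbdω htω
    have : Tendsto (fun n => ‖Y n ω‖) atTop (nhds ‖flim ω‖) := htω.norm
    exact le_of_tendsto' this hbdω
  have hflim_int : Integrable flim := Integrable.mono' hbdint hflim_meas hflim_bd
  have hDCT := tendsto_integral_of_dominated_convergence bd hYmeas hbdint hYbd hYtend
  have hptend : Tendsto p atTop (nhds ((∫ ω, flim ω) / (-δ))) := by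
    have h1 : Tendsto (fun n => (∫ ω, Y n ω) / (-δ)) atTop
        (nhds ((∫ ω, flim ω) / (-δ))) := hDCT.div_const _
    convert h1 using 2 with n
    rw [hWald n]
    field_simp
  have hflim_le : (∫ ω, flim ω) ≤ -c := by
    have hle : ∀ᵐ ω, flim ω ≤ -c := by
      filter_upwards [hae] with ω hω
      rw [hflim]
      simp only [dif_pos hω]
      have := (Nat.find_spec hω).2
      linarith
    calc (∫ ω, flim ω) ≤ ∫ _ω, (-c : ℝ) :=
          integral_mono_ae hflim_int (integrable_const _) hle
      _ = -c := by simp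
  have hL : c / δ ≤ (∫ ω, flim ω) / (-δ) := by
    have he : (∫ ω, flim ω) / (-δ) = (-(∫ ω, flim ω)) / δ := by
      rw [div_neg, neg_div]
    rw [he]
    exact (div_le_div_iff_of_pos_right hδ).mpr (by linarith)
  exact le_trans hL (le_of_tendsto' hptend hpJ)

lemma eps_tendsto (D : ℕ → Ω → ℝ) (hD : ∀ k, Measurable (D k))
    (hDint : Integrable (D 1)) :
    Tendsto (fun n : ℕ => ∫ ω, max (-(D 1 ω) - n) 0) atTop (nhds 0) := by
  have h := tendsto_integral_of_dominated_convergence (μ := (ℙ : Measure Ω))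
    (F := fun (n : ℕ) ω => max (-(D 1 ω) - n) 0) (f := fun _ => (0:ℝ))
    (bound := fun ω => |D 1 ω|)
    (fun n => ((gM_meas (n:ℝ)).comp (hD 1)).aestronglyMeasurable)
    hDint.abs
    (fun n => by
      filter_upwards with ω
      show ‖max (-(D 1 ω) - (n:ℝ)) 0‖ ≤ |D 1 ω|
      rw [Real.norm_eq_abs, abs_of_nonneg (le_max_right _ _)]
      rcases le_or_gt (-(D 1 ω) - n) 0 with h | h
      · rw [max_eq_right h]; exact abs_nonneg _
      · rw [max_eq_left h.le]
        have h2 := neg_abs_le (D 1 ω)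
        have h3 : (0:ℝ) ≤ n := Nat.cast_nonneg n
        linarith)
    (by
      filter_upwards with ω
      apply tendsto_atTop_of_eventually_const (i₀ := ⌈-(D 1 ω)⌉₊)
      intro n hn
      apply max_eq_right
      have h1 : -(D 1 ω) ≤ ⌈-(D 1 ω)⌉₊ := Nat.le_ceil _
      have h2 : ((⌈-(D 1 ω)⌉₊ : ℕ) : ℝ) ≤ n := Nat.cast_le.mpr hn
      linarith)
  simpa using h



end ProbPart2

end RWaux

/-- **Proposition 3.2(ii), first limit.** For the reflected random walk driven by an
i.i.d. sequence `(D k)` with `δ = −E[D] > 0`, `E[D²] < ∞` and `P{D > 0} > 0`, started at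
`Φ^r(0) = r·x` with `x > 0`, the first return time `τ₀^r` to the origin has finite mean,
and `r⁻¹ E[τ₀^r] → δ⁻¹ x` as `r → ∞`. -/
theorem reflected_rw_return_time_fluid_limit {Ω : Type*} [MeasureSpace Ω]
    [IsProbabilityMeasure (ℙ : Measure Ω)]
    (D : ℕ → Ω → ℝ) (hDmeas : ∀ k, Measurable (D k))
    (hiid : iIndepFun D)
    (hident : ∀ k, IdentDistrib (D k) (D 1))
    (δ : ℝ) (hδ : 0 < δ) (hDint : Integrable (D 1)) (hmean : (∫ ω, D 1 ω) = -δ)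
    (hDsq : Integrable (fun ω => (D 1 ω) ^ 2))
    (hpos : 0 < ℙ {ω | 0 < D 1 ω})
    (x : ℝ) (hx : 0 < x)
    (Φ : ℝ → ℕ → Ω → ℝ)
    (hΦ0 : ∀ r ω, Φ r 0 ω = r * x)
    (hΦstep : ∀ r k ω, Φ r (k + 1) ω = max (Φ r k ω + D (k + 1) ω) 0)
    (τ : ℝ → Ω → ℝ≥0∞)
    (hτ : ∀ r ω, τ r ω = ⨅ (k : ℕ) (_ : 1 ≤ k ∧ Φ r k ω = 0), (k : ℝ≥0∞)) :
    (∀ r : ℝ, 0 < r → (∫⁻ ω, τ r ω) < ⊤) ∧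
      Tendsto (fun r : ℝ => r⁻¹ * (∫⁻ ω, τ r ω).toReal) atTop (nhds (δ⁻¹ * x)) := by
  have heps := eps_tendsto D hDmeas hDint
  -- the formula for the lintegral
  have hformula : ∀ r : ℝ, 0 < r →
      (∫⁻ ω, τ r ω) = ⨆ n, ∑ k ∈ Finset.Icc 1 n, ℙ (rwA D (r*x) k) := by
    intro r hr
    have hc : 0 < r * x := mul_pos hr hx
    have h1 : ∀ ω, τ r ω = ⨆ n, ∑ k ∈ Finset.Icc 1 n,
        Set.indicator (rwA D (r*x) k) (fun _ => (1:ℝ≥0∞)) ω := by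
      intro ω
      rw [hτ r ω,
        rwTauEq D (r*x) hc (Φ r) ω (hΦ0 r ω) (fun k => hΦstep r k ω),
        rwSupEq]
    rw [lintegral_congr h1]
    exact rwLintegral D hDmeas (r*x)
  -- upper bound on the sup
  have hJle : ∀ (c M : ℝ), 0 < c → 0 ≤ M → (∫ ω, max (-(D 1 ω) - M) 0) < δ →
      (⨆ n, ∑ k ∈ Finset.Icc 1 n, ℙ (rwA D c k))
        ≤ ENNReal.ofReal ((c + M) / (δ - ∫ ω, max (-(D 1 ω) - M) 0)) := by
    intro c M hc hM heM
    refine iSup_le fun n => ?_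
    have hqne : (∑ k ∈ Finset.Icc 1 n, ℙ (rwA D c k)) ≠ ⊤ :=
      ENNReal.sum_ne_top.mpr fun k _ => measure_ne_top _ _
    rw [← ENNReal.ofReal_toReal hqne]
    apply ENNReal.ofReal_le_ofReal
    rw [ENNReal.toReal_sum (fun k _ => measure_ne_top _ _)]
    exact rwUpper D hDmeas hiid hident δ hδ hDint hmean c hc M hM heM n
  -- a uniform M₀ with small truncation error
  obtain ⟨M₀, hM₀⟩ : ∃ n : ℕ, (∫ ω, max (-(D 1 ω) - n) 0) < δ :=
    (heps.eventually (gt_mem_nhds hδ)).exists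
  have hfin : ∀ r : ℝ, 0 < r → (∫⁻ ω, τ r ω) < ⊤ := by
    intro r hr
    rw [hformula r hr]
    exact lt_of_le_of_lt
      (hJle (r*x) M₀ (mul_pos hr hx) (Nat.cast_nonneg M₀) hM₀)
      ENNReal.ofReal_lt_top
  refine ⟨hfin, ?_⟩
  -- real-valued bounds
  have hlow : ∀ r : ℝ, 0 < r → (r * x) / δ ≤ (∫⁻ ω, τ r ω).toReal := by
    intro r hr
    rw [hformula r hr]
    apply rwLower D hDmeas hiid hident δ hδ hDint hmean (r*x) (mul_pos hr hx)
    rw [← hformula r hr]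
    exact (hfin r hr).ne
  have hup : ∀ (r : ℝ), 0 < r → ∀ (M : ℝ), 0 ≤ M →
      (∫ ω, max (-(D 1 ω) - M) 0) < δ →
      (∫⁻ ω, τ r ω).toReal ≤ (r * x + M) / (δ - ∫ ω, max (-(D 1 ω) - M) 0) := by
    intro r hr M hM heM
    have hb : 0 ≤ (r * x + M) / (δ - ∫ ω, max (-(D 1 ω) - M) 0) := by
      apply div_nonneg
      · have := mul_pos hr hx; linarith
      · linarith
    refine ENNReal.toReal_le_of_le_ofReal hb ?_
    rw [hformula r hr]
    exact hJle (r*x) M (mul_pos hr hx) hM heM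
  -- the limit
  rw [Metric.tendsto_atTop]
  intro ε hε
  have hηpos : 0 < min (δ/2) (ε * δ^2 / (4*x+4)) := lt_min (by positivity) (by positivity)
  obtain ⟨N, hN⟩ : ∃ n : ℕ, (∫ ω, max (-(D 1 ω) - n) 0) < min (δ/2) (ε * δ^2 / (4*x+4)) :=
    (heps.eventually (gt_mem_nhds hηpos)).exists
  set e := ∫ ω, max (-(D 1 ω) - (N:ℝ)) 0 with hedef
  have he0 : 0 ≤ e := gM_nonneg_int D N
  have he1 : e < δ/2 := lt_of_lt_of_le hN (min_le_left _ _)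
  have he2 : e < ε * δ^2 / (4*x+4) := lt_of_lt_of_le hN (min_le_right _ _)
  have heδ : e < δ := by linarith
  refine ⟨max 1 (4*(N:ℝ)/(ε*δ) + 1), fun r hr => ?_⟩
  have hr1 : (1:ℝ) ≤ r := le_trans (le_max_left _ _) hr
  have hr2 : 4*(N:ℝ)/(ε*δ) + 1 ≤ r := le_trans (le_max_right _ _) hr
  have hrpos : 0 < r := lt_of_lt_of_le one_pos hr1
  have hlowr : x / δ ≤ r⁻¹ * (∫⁻ ω, τ r ω).toReal := by
    have h1 := hlow r hrpos
    have h2 : r⁻¹ * ((r * x) / δ) = x / δ := by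
      field_simp
    calc x / δ = r⁻¹ * ((r * x) / δ) := h2.symm
      _ ≤ r⁻¹ * (∫⁻ ω, τ r ω).toReal := by
          apply mul_le_mul_of_nonneg_left h1 (by positivity)
  have hde : 0 < δ - e := by linarith
  have hupr : r⁻¹ * (∫⁻ ω, τ r ω).toReal ≤ x / (δ - e) + (N:ℝ) / (r * (δ - e)) := by
    have h1 := hup r hrpos N (Nat.cast_nonneg N) heδ
    have e1 : r⁻¹ * ((r * x + (N:ℝ)) / (δ - e)) = (r * x + (N:ℝ)) / (r * (δ - e)) := by
      rw [inv_mul_eq_div, div_div, mul_comm (δ - e) r]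
    have e2 : x / (δ - e) = (r * x) / (r * (δ - e)) := by
      rw [mul_div_mul_left _ _ (ne_of_gt hrpos)]
    have e3 : (r * x) / (r * (δ - e)) + (N:ℝ) / (r * (δ - e))
        = (r * x + (N:ℝ)) / (r * (δ - e)) := (add_div _ _ _).symm
    calc r⁻¹ * (∫⁻ ω, τ r ω).toReal ≤ r⁻¹ * ((r * x + (N:ℝ)) / (δ - e)) := by
          apply mul_le_mul_of_nonneg_left h1 (by positivity)
      _ = (r * x + (N:ℝ)) / (r * (δ - e)) := e1
      _ = x / (δ - e) + (N:ℝ) / (r * (δ - e)) := by rw [e2, ← e3]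
  -- numeric estimates
  have hA : x / (δ - e) - x / δ < ε / 2 := by
    have h1 : x / (δ - e) - x / δ = x * e / ((δ - e) * δ) := by
      field_simp
      ring
    rw [h1]
    have h2 : x * e / ((δ - e) * δ) ≤ x * e / ((δ/2) * δ) := by
      apply div_le_div_of_nonneg_left (mul_nonneg (le_of_lt hx) he0) (by positivity)
      nlinarith
    have h4 : e * (4*x+4) < ε * δ^2 := by
      have := (lt_div_iff₀ (show (0:ℝ) < 4*x+4 by linarith)).mp he2
      linarith
    have h3 : x * e / ((δ/2) * δ) < ε / 2 := by
      rw [div_lt_iff₀ (by positivity)]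
      nlinarith [mul_nonneg (le_of_lt hx) he0, he0]
    linarith
  have hB : (N:ℝ) / (r * (δ - e)) < ε / 2 := by
    rw [div_lt_iff₀ (by positivity)]
    have h5 : 4*(N:ℝ) ≤ (r - 1) * (ε*δ) := by
      have hεδ : (0:ℝ) < ε*δ := by positivity
      calc 4*(N:ℝ) = (4*(N:ℝ)/(ε*δ)) * (ε*δ) := by field_simp
        _ ≤ (r - 1) * (ε*δ) := mul_le_mul_of_nonneg_right (by linarith) (le_of_lt hεδ)
    have h6 : r * (δ/2) < r * (δ - e) := by
      apply mul_lt_mul_of_pos_left (by linarith) hrpos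
    nlinarith [mul_lt_mul_of_pos_left h6 (show (0:ℝ) < ε/2 by positivity),
      mul_pos (mul_pos hε hδ) hrpos]
  rw [Real.dist_eq]
  have hδx : δ⁻¹ * x = x / δ := inv_mul_eq_div δ x
  rw [hδx, abs_of_nonneg (by linarith [hlowr])]
  linarith [hupr, hA, hB]
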